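/- Let G be a graph on vertex set V, and for X ⊆ V define the skew discrepancy D_ν(X) = |e(X) − (1/2)·binom(|X|,2)| − ν·|X|^{3/2} for a real ν > 0. Suppose X ⊆ V with |X| = n ≥ 2 attains the maximum of D_ν over all subsets of V, and suppose e(X) > (1/2)·binom(n,2). Then every vertex x ∈ X satisfies deg_{G[X]}(x) ≥ (n−1)/2 + ν·√(n−1). -/

import Mathlib

open Finset
open scoped Classical

/-- Number of edges of `G` with both endpoints in `X`, as a real number. -/
noncomputable def edgesIn {V : Type*} (G : SimpleGraph V) (X : Finset V) : ℝ :=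
  (((X ×ˢ X).filter fun p => G.Adj p.1 p.2).card : ℝ) / 2

/-- Discrepancy `D(X) = e(X) - (1/2) * binom(|X|, 2)`. -/
noncomputable def disc {V : Type*} (G : SimpleGraph V) (X : Finset V) : ℝ :=
  edgesIn G X - (X.card.choose 2 : ℝ) / 2

/-- Skew discrepancy `D_ν(X) = |D(X)| - ν * |X|^{3/2}`. -/
noncomputable def skewDisc {V : Type*} (G : SimpleGraph V) (ν : ℝ) (X : Finset V) : ℝ :=
  |disc G X| - ν * (X.card : ℝ) ^ ((3 : ℝ) / 2)

lemma prodFilterCard {V : Type*} (G : SimpleGraph V) (X : Finset V) :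
    ((X ×ˢ X).filter fun p => G.Adj p.1 p.2).card
      = ∑ a ∈ X, (X.filter (G.Adj a)).card := by
  classical
  rw [Finset.card_filter, Finset.sum_product]
  refine Finset.sum_congr rfl fun a _ => ?_
  rw [Finset.card_filter]

lemma edge_count_erase {V : Type*} (G : SimpleGraph V) (X : Finset V) (x : V) (hx : x ∈ X) :
    ((X ×ˢ X).filter fun p => G.Adj p.1 p.2).card
      = (((X.erase x) ×ˢ (X.erase x)).filter fun p => G.Adj p.1 p.2).card
        + 2 * (X.filter (G.Adj x)).card := by
  classical
  set X' := X.erase x with hX'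
  have hxX' : x ∉ X' := Finset.notMem_erase _ _
  have hins : X = insert x X' := (Finset.insert_erase hx).symm
  rw [prodFilterCard, prodFilterCard]
  have hfilter : ∀ a, X.filter (G.Adj a) =
      if G.Adj a x then insert x (X'.filter (G.Adj a)) else X'.filter (G.Adj a) := by
    intro a
    rw [hins, Finset.filter_insert]
  have hd : (X.filter (G.Adj x)).card = (X'.filter (G.Adj x)).card := by
    rw [hfilter x, if_neg (G.irrefl (v := x))]
  have hsum : ∀ a ∈ X', (X.filter (G.Adj a)).card
      = (X'.filter (G.Adj a)).card + (if G.Adj a x then 1 else 0) := by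
    intro a _
    rw [hfilter a]
    split_ifs with h
    · rw [Finset.card_insert_of_notMem (by simp [hxX'])]
    · simp
  calc ∑ a ∈ X, (X.filter (G.Adj a)).card
      = (X.filter (G.Adj x)).card + ∑ a ∈ X', (X.filter (G.Adj a)).card := by
        rw [hins, Finset.sum_insert hxX']
    _ = (X.filter (G.Adj x)).card + (∑ a ∈ X', (X'.filter (G.Adj a)).card
          + ∑ a ∈ X', (if G.Adj a x then 1 else 0)) := by
        rw [Finset.sum_congr rfl hsum, Finset.sum_add_distrib]
    _ = ∑ a ∈ X', (X'.filter (G.Adj a)).card + 2 * (X.filter (G.Adj x)).card := by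
        have : ∑ a ∈ X', (if G.Adj a x then 1 else 0) = (X'.filter (fun a => G.Adj a x)).card := by
          rw [Finset.card_filter]
        rw [this]
        have hsymm : X'.filter (fun a => G.Adj a x) = X'.filter (G.Adj x) := by
          apply Finset.filter_congr
          intro a _
          simp [G.adj_comm]
        rw [hsymm, ← hd]
        ring

lemma rpow_three_halves (t : ℝ) (ht : 0 < t) : t ^ ((3:ℝ)/2) = t * Real.sqrt t := by
  rw [Real.sqrt_eq_rpow, ← Real.rpow_one_add' (le_of_lt ht) (by norm_num)]
  norm_num

theorem stmt_3 {V : Type*} [Fintype V] (G : SimpleGraph V) (ν : ℝ) (hν : 0 < ν)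
    (X : Finset V) (n : ℕ) (hX : X.card = n) (hn : 2 ≤ n)
    (hmax : ∀ Y : Finset V, skewDisc G ν Y ≤ skewDisc G ν X)
    (hpos : ((n.choose 2 : ℝ)) / 2 < edgesIn G X) :
    ∀ x ∈ X, ((n : ℝ) - 1) / 2 + ν * Real.sqrt ((n : ℝ) - 1)
      ≤ ((X.filter fun y => G.Adj x y).card : ℝ) := by
  intro x hx
  classical
  set X' := X.erase x with hX'def
  have hcard' : X'.card = n - 1 := by rw [hX'def, Finset.card_erase_of_mem hx, hX]
  have hn1 : (1:ℕ) ≤ n := le_trans (by norm_num) hn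
  have hcastn1 : ((n - 1 : ℕ) : ℝ) = (n : ℝ) - 1 := by
    rw [Nat.cast_sub hn1]; norm_num
  set d : ℝ := ((X.filter fun y => G.Adj x y).card : ℝ) with hd
  -- edge counts
  have hedge : edgesIn G X = edgesIn G X' + d := by
    have := edge_count_erase G X x hx
    rw [edgesIn, edgesIn, this]
    push_cast
    ring
  -- choose identity
  have hchoose : (n.choose 2 : ℝ) = ((n-1).choose 2 : ℝ) + ((n:ℝ) - 1) := by
    obtain ⟨m, rfl⟩ : ∃ m, n = m + 1 := ⟨n - 1, (Nat.succ_pred_eq_of_pos (by omega)).symm⟩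
    rw [Nat.choose_succ_succ]
    push_cast [Nat.choose_one_right]
    ring
  -- disc difference
  have hdisc : disc G X - disc G X' = d - ((n:ℝ) - 1) / 2 := by
    rw [disc, disc, hX, hcard', hedge, hchoose]
    ring
  -- positivity of disc X
  have hdpos : 0 < disc G X := by
    rw [disc, hX]; linarith
  -- use maximality
  have hmaxi := hmax X'
  rw [skewDisc, skewDisc, hX, hcard', hcastn1, abs_of_pos hdpos] at hmaxi
  have habs : disc G X' ≤ |disc G X'| := le_abs_self _
  -- rpow estimate
  have hb : (0:ℝ) < (n:ℝ) - 1 := by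
    have : (2:ℝ) ≤ (n:ℝ) := by exact_mod_cast hn
    linarith
  have ha : (0:ℝ) < (n:ℝ) := by linarith
  have hsq : Real.sqrt ((n:ℝ) - 1) ≤ Real.sqrt (n:ℝ) := Real.sqrt_le_sqrt (by linarith)
  have hsqpos : 0 ≤ Real.sqrt ((n:ℝ) - 1) := Real.sqrt_nonneg _
  have hkey : ((n:ℝ) - 1) ^ ((3:ℝ)/2) + Real.sqrt ((n:ℝ) - 1) ≤ (n:ℝ) ^ ((3:ℝ)/2) := by
    rw [rpow_three_halves _ hb, rpow_three_halves _ ha]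
    have : ((n:ℝ) - 1) * Real.sqrt ((n:ℝ)-1) + Real.sqrt ((n:ℝ)-1)
        = (n:ℝ) * Real.sqrt ((n:ℝ)-1) := by ring
    rw [this]
    exact mul_le_mul_of_nonneg_left hsq (le_of_lt ha)
  -- conclude
  nlinarith [mul_le_mul_of_nonneg_left hkey (le_of_lt hν)]
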